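/- Let α, β be real numbers and let i < j be integers in [0,5] with j − i = 4. Then α·x^i + β·x^j ∈ ℤ[x] if and only if there exist integers α₁, α₂, β₁, β₂ such that α = (α₁ + α₂√3)/√3, β = (β₁ + β₂√3)/√3, and α₁ − 2β₁ is divisible by 3. -/

import Mathlib

/-- `x = exp(πi/6)`, a primitive 12th root of unity. -/
noncomputable def x : ℂ := Complex.exp (Real.pi * Complex.I / 6)

lemma hx : x = (Real.sqrt 3 / 2 : ℝ) + (1/2 : ℝ) * Complex.I := by
  unfold x
  rw [show (Real.pi * Complex.I / 6 : ℂ) = ((Real.pi/6 : ℝ) : ℂ) * Complex.I by push_cast; ring,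
    Complex.exp_mul_I, ← Complex.ofReal_cos, ← Complex.ofReal_sin,
    Real.cos_pi_div_six, Real.sin_pi_div_six]

lemma hxre : x.re = Real.sqrt 3 / 2 := by rw [hx]; simp
lemma hxim : x.im = 1 / 2 := by rw [hx]; simp

lemma h3 : Real.sqrt 3 * Real.sqrt 3 = 3 := Real.mul_self_sqrt (by norm_num)

lemma hx2 : x^2 = (1/2 : ℝ) + (Real.sqrt 3/2 : ℝ) * Complex.I := by
  rw [hx]; rw [Complex.ext_iff]
  constructor <;> simp [pow_two, Complex.mul_re, Complex.mul_im] <;> nlinarith [h3]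

lemma hx3 : x^3 = Complex.I := by
  rw [show (3:ℕ) = 2+1 by rfl, pow_succ, hx2, hx, Complex.ext_iff]
  constructor <;> simp [Complex.mul_re, Complex.mul_im] <;> nlinarith [h3]

lemma hx4 : x^4 = (-1/2 : ℝ) + (Real.sqrt 3/2 : ℝ) * Complex.I := by
  rw [show (4:ℕ) = 3+1 by rfl, pow_succ, hx3, hx, Complex.ext_iff]
  constructor <;> simp [Complex.mul_re, Complex.mul_im] <;> nlinarith [h3]

lemma hx5 : x^5 = (-Real.sqrt 3/2 : ℝ) + (1/2 : ℝ) * Complex.I := by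
  rw [show (5:ℕ) = 4+1 by rfl, pow_succ, hx4, hx, Complex.ext_iff]
  constructor <;> simp [Complex.mul_re, Complex.mul_im] <;> nlinarith [h3]

lemma sum_expand (n : Fin 6 → ℤ) :
    (∑ k : Fin 6, (n k : ℂ) * x ^ (k : ℕ)) =
    n 0 + n 1 * x + n 2 * x^2 + n 3 * x^3 + n 4 * x^4 + n 5 * x^5 := by
  simp [Fin.sum_univ_six, show ((3:Fin 6):ℕ) = 3 from rfl, show ((4:Fin 6):ℕ) = 4 from rfl,
    show ((5:Fin 6):ℕ) = 5 from rfl]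


/-- `ℤ[x]`: the additive subgroup of `ℂ` generated by `x^k`, `0 ≤ k ≤ 5`. -/
def Zx : Set ℂ := {z | ∃ n : Fin 6 → ℤ, z = ∑ k : Fin 6, (n k : ℂ) * x ^ (k : ℕ)}

lemma mem_Zx_iff (z : ℂ) : z ∈ Zx ↔ ∃ a b c d : ℤ,
    z.re = a + c/2 + b*Real.sqrt 3/2 ∧ z.im = d + b/2 + c*Real.sqrt 3/2 := by
  constructor
  · rintro ⟨n, rfl⟩
    rw [sum_expand]
    rw [hx5, hx4, hx3, hx2, hx]
    refine ⟨n 0 - n 4, n 1 - n 5, n 2 + n 4, n 3 + n 5, ?_, ?_⟩ <;>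
      · simp [Complex.mul_re, Complex.mul_im]
        push_cast
        ring
  · rintro ⟨a, b, c, d, h1, h2⟩
    refine ⟨![a, b, c, d, 0, 0], ?_⟩
    rw [sum_expand, hx5, hx4, hx3, hx2, hx, Complex.ext_iff]
    constructor <;>
      · simp [Complex.mul_re, Complex.mul_im, h1, h2,
          show (![a,b,c,d,0,0] : Fin 6 → ℤ) 5 = 0 from rfl]
        push_cast
        ring


theorem stmt5 (α β : ℝ) (i j : ℕ) (hj : j ≤ 5) (hij : i < j) (hd : j - i = 4) :
    (α : ℂ) * x ^ i + (β : ℂ) * x ^ j ∈ Zx ↔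
      ∃ α₁ α₂ β₁ β₂ : ℤ,
        α = (α₁ + α₂ * Real.sqrt 3) / Real.sqrt 3 ∧
        β = (β₁ + β₂ * Real.sqrt 3) / Real.sqrt 3 ∧
        (3 : ℤ) ∣ (α₁ - 2 * β₁) := by
  have hs0 : Real.sqrt 3 ≠ 0 := by positivity
  have hcase : i = 0 ∧ j = 4 ∨ i = 1 ∧ j = 5 := by omega
  rcases hcase with ⟨rfl, rfl⟩ | ⟨rfl, rfl⟩
  · rw [mem_Zx_iff]
    constructor
    · rintro ⟨a, b, c, d, h1, h2⟩
      rw [hx4] at h1 h2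
      simp [Complex.add_re, Complex.add_im, Complex.mul_re, Complex.mul_im] at h1 h2
      refine ⟨d + 2*b, a + c, b + 2*d, c, ?_, ?_, ⟨-d, by ring⟩⟩
      · push_cast
        field_simp
        linear_combination Real.sqrt 3 * h1 + h2 + ((b:ℝ)/2) * h3
      · push_cast
        field_simp
        linear_combination 2 * h2
    · rintro ⟨α₁, α₂, β₁, β₂, ha, hb, k, hk⟩
      have hkr : (α₁:ℝ) - 2*β₁ = 3*k := by exact_mod_cast congrArg (Int.cast : ℤ → ℝ) hk
      refine ⟨α₂ - β₂, β₁ + 2*k, β₂, -k, ?_, ?_⟩ <;>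
        · rw [hx4]
          simp only [Complex.add_re, Complex.add_im, Complex.mul_re, Complex.mul_im,
            Complex.ofReal_re, Complex.ofReal_im, pow_zero, Complex.one_re, Complex.one_im,
              Complex.I_re, Complex.I_im]
          rw [ha, hb]
          push_cast
          field_simp
          try ring
          try linear_combination 2*hkr + (-(β₁:ℝ)-2*(k:ℝ))*h3
  · rw [mem_Zx_iff]
    constructor
    · rintro ⟨a, b, c, d, h1, h2⟩
      rw [pow_one, hx5, hx] at h1 h2
      simp [Complex.add_re, Complex.add_im, Complex.mul_re, Complex.mul_im] at h1 h2
      refine ⟨a + 2*c, b + d, c - a, d, ?_, ?_, ⟨a, by ring⟩⟩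
      · push_cast
        field_simp
        linear_combination h1 + Real.sqrt 3 * h2 + ((c:ℝ)/2) * h3
      · push_cast
        field_simp
        linear_combination (-1) * h1 + Real.sqrt 3 * h2 + ((c:ℝ)/2) * h3
    · rintro ⟨α₁, α₂, β₁, β₂, ha, hb, k, hk⟩
      have hkr : (α₁:ℝ) - 2*β₁ = 3*k := by exact_mod_cast congrArg (Int.cast : ℤ → ℝ) hk
      refine ⟨k, α₂ - β₂, k + β₁, β₂, ?_, ?_⟩ <;>
        · rw [pow_one, hx5, hx]
          simp only [Complex.add_re, Complex.add_im, Complex.mul_re, Complex.mul_im,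
            Complex.ofReal_re, Complex.ofReal_im, Complex.I_re, Complex.I_im]
          rw [ha, hb]
          push_cast
          field_simp
          try ring
          try linear_combination Real.sqrt 3*hkr
          try linear_combination hkr + (-(β₁:ℝ)-(k:ℝ))*h3
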